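/- Let (s,t) ∈ ℚ²∖ℤ² and let A = ((a,b),(c,d)) ∈ Γ_{(s,t)} := { A ∈ SL(2,ℤ) : (s,t)A − (s,t) ∈ ℤ² }. Set u := s(a−1)+tc and v := sb+t(d−1); then u, v ∈ ℤ and, for all τ ∈ ℍ, (g_{(s,t)} |₁ A)(τ) − g_{(s,t)}(τ) = u·η₁(τ) + v·η₂(τ). -/

import Mathlib

/-- The lattice `ℤτ + ℤ`. -/
def lat (τ : ℂ) : Set ℂ := {w : ℂ | ∃ m n : ℤ, w = (m : ℂ) * τ + (n : ℂ)}

/-- The Weierstrass ζ-function attached to a set `Ω ⊂ ℂ`. -/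
noncomputable def wzeta (Ω : Set ℂ) (z : ℂ) : ℂ :=
  1 / z + ∑' ω : {w : ℂ // w ∈ Ω ∧ w ≠ 0},
    (1 / (z - (ω : ℂ)) + 1 / (ω : ℂ) + z / (ω : ℂ) ^ 2)

/-- `g_{(s,t)}(τ) = ζ(τ, sτ + t)`, where `ζ(τ,z) = ζ(τℤ+ℤ, z)`. -/
noncomputable def g (s t : ℚ) (τ : ℂ) : ℂ := wzeta (lat τ) ((s : ℂ) * τ + (t : ℂ))

namespace WZ

noncomputable def L (τ : ℂ) (p : ℤ × ℤ) : ℂ := (p.1 : ℂ) * τ + (p.2 : ℂ)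

abbrev S := {p : ℤ × ℤ // p ≠ 0}

noncomputable def zterm (τ : ℂ) (p : ℤ × ℤ) (w : ℂ) : ℂ :=
  1 / (w - L τ p) + 1 / (L τ p) + w / (L τ p) ^ 2

noncomputable def zterm' (τ : ℂ) (p : ℤ × ℤ) (w : ℂ) : ℂ :=
  1 / (L τ p) ^ 2 - 1 / (w - L τ p) ^ 2

noncomputable def zterm'' (τ : ℂ) (p : ℤ × ℤ) (w : ℂ) : ℂ :=
  2 / (w - L τ p) ^ 3

noncomputable def Z1 (τ : ℂ) (w : ℂ) : ℂ := -(1 / w ^ 2) + ∑' p : S, zterm' τ p.1 w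

noncomputable def Z2 (τ : ℂ) (w : ℂ) : ℂ := 2 / w ^ 3 + ∑' p : S, zterm'' τ p.1 w

noncomputable def Tfun (τ : ℂ) (w : ℂ) : ℂ := ∑' p : ℤ × ℤ, zterm'' τ p w

variable {τ : ℂ} (hτ : 0 < τ.im)


lemma L_zero : L τ 0 = 0 := by simp [L]

lemma L_add (p q : ℤ × ℤ) : L τ (p + q) = L τ p + L τ q := by
  simp [L, Prod.fst_add, Prod.snd_add]; push_cast; ring

lemma L_neg (p : ℤ × ℤ) : L τ (-p) = - L τ p := by
  simp [L]; push_cast; ring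

include hτ

/-- real combinations equality -/
lemma real_comb_eq {x y x' y' : ℝ} (h : (x:ℂ) * τ + y = (x':ℂ) * τ + y') : x = x' ∧ y = y' := by
  have him : x * τ.im = x' * τ.im := by
    have := congrArg Complex.im h
    simpa [Complex.add_im, Complex.mul_im] using this
  have hx : x = x' := by
    have := mul_right_cancel₀ (ne_of_gt hτ) him
    exact this
  refine ⟨hx, ?_⟩
  have hre := congrArg Complex.re h
  simp [Complex.add_re, Complex.mul_re, hx] at hre
  linarith

lemma L_inj : Function.Injective (L τ) := by
  rintro ⟨m, n⟩ ⟨m', n'⟩ h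
  have h' : ((m:ℝ):ℂ) * τ + ((n:ℝ):ℂ) = ((m':ℝ):ℂ) * τ + ((n':ℝ):ℂ) := by
    push_cast at h ⊢; exact h
  obtain ⟨h1, h2⟩ := real_comb_eq hτ h'
  have : m = m' := by exact_mod_cast h1
  have : n = n' := by exact_mod_cast h2
  simp_all

lemma L_ne_zero {p : ℤ × ℤ} (hp : p ≠ 0) : L τ p ≠ 0 := by
  intro h; exact hp (L_inj hτ (by rw [h, L_zero]))

lemma mem_lat_iff {z : ℂ} : z ∈ lat τ ↔ ∃ p : ℤ × ℤ, L τ p = z := by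
  constructor
  · rintro ⟨m, n, rfl⟩; exact ⟨(m, n), rfl⟩
  · rintro ⟨⟨m, n⟩, rfl⟩; exact ⟨m, n, rfl⟩

lemma real_comb_mem {x y : ℝ} : ((x:ℂ) * τ + (y:ℂ) ∈ lat τ) ↔ ∃ m n : ℤ, x = m ∧ y = n := by
  constructor
  · rintro ⟨m, n, h⟩
    have h' : (x:ℂ) * τ + y = ((m:ℝ):ℂ) * τ + ((n:ℝ):ℂ) := by push_cast at h ⊢; exact h
    obtain ⟨h1, h2⟩ := real_comb_eq hτ h'
    exact ⟨m, n, by exact_mod_cast h1, by exact_mod_cast h2⟩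
  · rintro ⟨m, n, rfl, rfl⟩; exact ⟨m, n, by push_cast; ring⟩

lemma lat_countable : (lat τ).Countable := by
  have : lat τ = Set.range (L τ) := by
    ext z; rw [mem_lat_iff hτ]; exact ⟨fun ⟨p, h⟩ => ⟨p, h⟩, fun ⟨p, h⟩ => ⟨p, h⟩⟩
  rw [this]; exact Set.countable_range _


lemma lat_closed : IsClosed (lat τ) := by
  have hτ0 : τ.im ≠ 0 := ne_of_gt hτ
  have : lat τ = (fun w : ℂ => (w.im / τ.im, w.re - w.im / τ.im * τ.re)) ⁻¹'
      ((Set.range ((↑) : ℤ → ℝ)) ×ˢ (Set.range ((↑) : ℤ → ℝ))) := by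
    ext w
    constructor
    · rintro ⟨m, n, rfl⟩
      have him : ((m:ℂ) * τ + (n:ℂ)).im = m * τ.im := by
        simp [Complex.add_im, Complex.mul_im]
      have hre : ((m:ℂ) * τ + (n:ℂ)).re = m * τ.re + n := by
        simp [Complex.add_re, Complex.mul_re]
      constructor
      · exact ⟨m, by simp only [him]; field_simp⟩
      · refine ⟨n, ?_⟩
        show (n:ℝ) = ((m:ℂ)*τ+(n:ℂ)).re - ((m:ℂ)*τ+(n:ℂ)).im / τ.im * τ.re
        rw [hre, him]; field_simp; ring
    · rintro ⟨⟨m, hm⟩, ⟨n, hn⟩⟩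
      have hm' : w.im / τ.im = m := hm.symm
      have hn' : w.re - w.im / τ.im * τ.re = n := hn.symm
      have him : w.im = m * τ.im := by field_simp at hm'; linarith [hm']
      refine ⟨m, n, ?_⟩
      apply Complex.ext
      · simp only [Complex.add_re, Complex.mul_re, Complex.intCast_re, Complex.intCast_im,
          Complex.ofReal_re]
        rw [hm'] at hn'
        simp; linarith [hn']
      · simp [Complex.add_im, Complex.mul_im, him]
  rw [this]
  refine IsClosed.preimage (by fun_prop) ?_
  exact (Int.isClosedEmbedding_coe_real.isClosed_range).prod
    Int.isClosedEmbedding_coe_real.isClosed_range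

omit hτ in
lemma norm_prod_eq (p : ℤ × ℤ) : ‖p‖ = max |(p.1 : ℝ)| |(p.2 : ℝ)| := by
  rw [Prod.norm_def]; simp [Int.norm_eq_abs]

lemma exists_c : ∃ c > 0, ∀ p : ℤ × ℤ, c * ‖p‖ ≤ ‖L τ p‖ := by
  set ε : ℝ := 1 / (2 * (1 + |τ.re|)) with hε
  have hre : 0 ≤ |τ.re| := abs_nonneg _
  have hεpos : 0 < ε := by positivity
  have hεre : ε * |τ.re| ≤ 1 / 2 := by
    rw [hε]; rw [div_mul_eq_mul_div, mul_comm]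
    rw [div_le_div_iff₀ (by positivity) (by norm_num)]
    nlinarith
  refine ⟨min (ε * τ.im) (1 / 2), lt_min (by positivity) (by norm_num), fun p => ?_⟩
  set M : ℝ := ‖p‖ with hM
  have hM0 : 0 ≤ M := norm_nonneg _
  have hmM : |(p.1 : ℝ)| ≤ M := by rw [hM, norm_prod_eq]; exact le_max_left _ _
  have hnM : |(p.2 : ℝ)| ≤ M := by rw [hM, norm_prod_eq]; exact le_max_right _ _
  have him : (L τ p).im = p.1 * τ.im := by simp [L, Complex.add_im, Complex.mul_im]
  have hre2 : (L τ p).re = p.1 * τ.re + p.2 := by simp [L, Complex.add_re, Complex.mul_re]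
  by_cases hcase : ε * M ≤ |(p.1 : ℝ)|
  · calc min (ε * τ.im) (1/2) * M ≤ ε * τ.im * M := by
          apply mul_le_mul_of_nonneg_right (min_le_left _ _) hM0
    _ = (ε * M) * τ.im := by ring
    _ ≤ |(p.1 : ℝ)| * τ.im := mul_le_mul_of_nonneg_right hcase hτ.le
    _ = |(L τ p).im| := by rw [him, abs_mul, abs_of_pos hτ]
    _ ≤ ‖L τ p‖ := Complex.abs_im_le_norm _
  · push_neg at hcase
    have hnM' : M = |(p.2 : ℝ)| := by
      rcases max_cases |(p.1 : ℝ)| |(p.2 : ℝ)| with ⟨h1, h2⟩ | ⟨h1, h2⟩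
      · exfalso
        have hε1 : ε ≤ 1 := by
          rw [hε, div_le_one (by positivity)]; nlinarith
        have hMm : M = |(p.1 : ℝ)| := by rw [hM, norm_prod_eq, h1]
        rw [hMm] at hcase
        nlinarith [abs_nonneg (p.1 : ℝ)]
      · rw [hM, norm_prod_eq, h1]
    calc min (ε * τ.im) (1/2) * M ≤ 1/2 * M := by
          apply mul_le_mul_of_nonneg_right (min_le_right _ _) hM0
    _ ≤ |(p.2 : ℝ)| - |(p.1 : ℝ)| * |τ.re| := by
        have : |(p.1 : ℝ)| * |τ.re| ≤ ε * M * |τ.re| := by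
          apply mul_le_mul_of_nonneg_right hcase.le hre
        have h2 : ε * M * |τ.re| = (ε * |τ.re|) * M := by ring
        nlinarith [hεre, hM0]
    _ ≤ |(p.1 : ℝ) * τ.re + p.2| := by
        have h4 := abs_sub_abs_le_abs_sub (p.2 : ℝ) (-((p.1:ℝ) * τ.re))
        rw [abs_neg, sub_neg_eq_add, abs_mul] at h4
        have h5 : (p.2 : ℝ) + (p.1:ℝ) * τ.re = (p.1:ℝ) * τ.re + p.2 := by ring
        rw [h5] at h4
        linarith
    _ = |(L τ p).re| := by rw [hre2]
    _ ≤ ‖L τ p‖ := Complex.abs_re_le_norm _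

lemma summable_norm_cube : Summable fun p : ℤ × ℤ => ‖L τ p‖⁻¹ ^ 3 := by
  obtain ⟨c, hc, hle⟩ := exists_c hτ
  have base : Summable fun p : ℤ × ℤ => ‖p‖ ^ (-(3:ℝ)) := by
    apply (finTwoArrowEquiv ℤ).summable_iff.mp
    have := EisensteinSeries.summable_one_div_norm_rpow (k := 3) (by norm_num)
    apply this.congr
    intro x
    have hnorm : ‖finTwoArrowEquiv ℤ x‖ = ‖x‖ := by
      rw [norm_prod_eq, EisensteinSeries.norm_eq_max_natAbs]
      simp only [finTwoArrowEquiv_apply]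
      push_cast [Nat.cast_natAbs]
      rfl
    simp only [Function.comp_apply, hnorm]
  have base' : Summable fun p : ℤ × ℤ => c⁻¹ ^ 3 * ‖p‖ ^ (-(3:ℝ)) := base.mul_left _
  apply base'.of_nonneg_of_le (fun p => by positivity)
  intro p
  rcases eq_or_ne p 0 with rfl | hp
  · simp [L]
  · have hp0 : (0:ℝ) < ‖p‖ := by
      rw [norm_pos_iff]; exact hp
    have hL0 : 0 < ‖L τ p‖ := lt_of_lt_of_le (by positivity) (hle p)
    have hr : ‖p‖ ^ (-(3:ℝ)) = (‖p‖ ^ (3:ℕ))⁻¹ := by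
      rw [Real.rpow_neg (norm_nonneg _), show ((3:ℝ)) = ((3:ℕ):ℝ) by norm_num,
        Real.rpow_natCast]
    rw [hr]
    have key : (c * ‖p‖) ^ 3 ≤ ‖L τ p‖ ^ 3 := pow_le_pow_left₀ (by positivity) (hle p) 3
    have h1 : ‖L τ p‖⁻¹ ^ 3 ≤ ((c * ‖p‖) ^ 3)⁻¹ := by
      rw [inv_pow]
      exact inv_anti₀ (by positivity) key
    calc ‖L τ p‖⁻¹ ^ 3 ≤ ((c * ‖p‖) ^ 3)⁻¹ := h1
    _ = c⁻¹ ^ 3 * (‖p‖ ^ (3:ℕ))⁻¹ := by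
        rw [mul_pow, mul_inv, inv_pow]

noncomputable def latEquiv : {p : ℤ × ℤ // p ≠ 0} ≃ {w : ℂ // w ∈ lat τ ∧ w ≠ 0} := by
  apply Equiv.ofBijective
    (fun p => ⟨L τ p.1, (mem_lat_iff hτ).mpr ⟨p.1, rfl⟩, L_ne_zero hτ p.2⟩)
  constructor
  · rintro ⟨p, hp⟩ ⟨q, hq⟩ h
    simp only [Subtype.mk.injEq] at h
    exact Subtype.ext (L_inj hτ h)
  · rintro ⟨w, hw, hw0⟩
    obtain ⟨p, hp⟩ := (mem_lat_iff hτ).mp hw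
    exact ⟨⟨p, fun h0 => hw0 (by rw [← hp, h0, L_zero])⟩, Subtype.ext hp⟩

lemma zeta_eq (z : ℂ) :
    wzeta (lat τ) z = 1 / z + ∑' p : {p : ℤ × ℤ // p ≠ 0}, zterm τ p.1 z := by
  unfold wzeta
  congr 1
  exact ((latEquiv hτ).tsum_eq _).symm

lemma zeta_odd (z : ℂ) : wzeta (lat τ) (-z) = - wzeta (lat τ) z := by
  rw [zeta_eq hτ, zeta_eq hτ, neg_add, ← tsum_neg]
  congr 1
  · simp [inv_neg]
  · rw [← Equiv.tsum_eq ((Equiv.neg (ℤ × ℤ)).subtypeEquiv (p := fun p => p ≠ 0)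
      (fun p => by simp))]
    apply tsum_congr
    intro p
    simp only [Equiv.subtypeEquiv_apply, Equiv.neg_apply]
    show zterm τ (-p.1) (-z) = - zterm τ p.1 z
    have hL : L τ (-p.1) = - L τ p.1 := by
      show ((-p.1.1 : ℤ) : ℂ) * τ + ((-p.1.2 : ℤ) : ℂ) = _
      unfold L; push_cast; ring
    unfold zterm
    rw [hL, neg_sub_neg, show L τ p.1 - z = -(z - L τ p.1) by ring, div_neg, div_neg,
      neg_sq, neg_div]
    ring


omit hτ in
lemma hom (lam : ℂ) (hlam : lam ≠ 0) (Ω : Set ℂ) (z : ℂ) :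
    wzeta ((fun x => lam * x) '' Ω) (lam * z) = lam⁻¹ * wzeta Ω z := by
  unfold wzeta
  let e : {w : ℂ // w ∈ Ω ∧ w ≠ 0} ≃ {w : ℂ // w ∈ (fun x => lam * x) '' Ω ∧ w ≠ 0} :=
    Equiv.ofBijective (fun ω => ⟨lam * ω.1, ⟨ω.1, ω.2.1, rfl⟩, mul_ne_zero hlam ω.2.2⟩)
      ⟨by
        rintro ⟨w, hw⟩ ⟨w', hw'⟩ h
        simp only [Subtype.mk.injEq] at h
        exact Subtype.ext (mul_left_cancel₀ hlam h),
       by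
        rintro ⟨w, ⟨x, hx, rfl⟩, hw0⟩
        exact ⟨⟨x, hx, fun h => hw0 (by simp [h])⟩, rfl⟩⟩
  rw [← e.tsum_eq]
  rw [mul_add, ← tsum_mul_left]
  congr 1
  · simp [one_div, mul_inv, mul_comm]
  · apply tsum_congr
    intro ω
    show 1 / (lam * z - lam * ω.1) + 1 / (lam * ω.1) + lam * z / (lam * ω.1) ^ 2 = _
    simp only [div_eq_mul_inv, ← mul_sub, mul_pow, mul_inv]
    ring_nf
    rw [show lam * lam⁻¹ ^ 2 = lam⁻¹ by rw [sq, ← mul_assoc, mul_inv_cancel₀ hlam, one_mul]]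

lemma cd_ne_zero {a b c d : ℤ} (hA : a * d - b * c = 1) : (c : ℂ) * τ + d ≠ 0 := by
  intro h
  have him : (c : ℝ) * τ.im = 0 := by
    have := congrArg Complex.im h
    simpa [Complex.add_im, Complex.mul_im] using this
  have hc : c = 0 := by
    rcases mul_eq_zero.mp him with h' | h'
    · exact_mod_cast h'
    · exact absurd h' (ne_of_gt hτ)
  rw [hc] at h
  simp at h
  have hd : d = 0 := by exact_mod_cast h
  rw [hc, hd] at hA; simp at hA

lemma lat_image {a b c d : ℤ} (hA : a * d - b * c = 1) :
    lat (((a : ℂ) * τ + b) / ((c : ℂ) * τ + d)) =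
      (fun x => ((c : ℂ) * τ + d)⁻¹ * x) '' lat τ := by
  have hcd := cd_ne_zero hτ hA
  set D : ℂ := (c : ℂ) * τ + d with hD
  set τ' : ℂ := ((a : ℂ) * τ + b) / D with hτ'
  ext w
  constructor
  · rintro ⟨m, n, rfl⟩
    refine ⟨((m * a + n * c : ℤ) : ℂ) * τ + ((m * b + n * d : ℤ) : ℂ), ⟨_, _, rfl⟩, ?_⟩
    rw [hτ']
    field_simp
    push_cast
    ring
  · rintro ⟨x, ⟨m, n, rfl⟩, rfl⟩
    refine ⟨m * d - n * c, -(m * b) + n * a, ?_⟩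
    rw [hτ']
    field_simp
    push_cast
    have h2 : ((a:ℂ) * d - b * c) = 1 := by exact_mod_cast congrArg (fun x : ℤ => (x : ℂ)) hA
    rw [hD]
    linear_combination (-((m:ℂ) * τ + n)) * h2





omit hτ in
lemma zero_mem_lat : (0 : ℂ) ∈ lat τ := ⟨0, 0, by simp⟩

omit hτ in
lemma norm_p_ge_one {p : ℤ × ℤ} (hp : p ≠ 0) : (1 : ℝ) ≤ ‖p‖ := by
  have h : p.1 ≠ 0 ∨ p.2 ≠ 0 := by
    by_contra h; push_neg at h; exact hp (Prod.ext_iff.mpr ⟨h.1, h.2⟩)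
  rw [Prod.norm_def]
  rcases h with h | h
  · exact le_trans (by rw [Int.norm_eq_abs]; exact_mod_cast Int.one_le_abs h) (le_max_left _ _)
  · exact le_trans (by rw [Int.norm_eq_abs]; exact_mod_cast Int.one_le_abs h) (le_max_right _ _)

include hτ

lemma finite_small (R : ℝ) : {p : ℤ × ℤ | ‖L τ p‖ < R}.Finite := by
  obtain ⟨c, hc, hle⟩ := exists_c hτ
  set N : ℤ := ⌈R / c⌉ with hN
  apply Set.Finite.subset (Set.finite_Icc ((-N, -N) : ℤ × ℤ) (N, N))
  intro p hp
  simp only [Set.mem_setOf_eq] at hp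
  have h1 : ‖p‖ < R / c := by
    rw [lt_div_iff₀ hc]
    calc ‖p‖ * c = c * ‖p‖ := by ring
    _ ≤ ‖L τ p‖ := hle p
    _ < R := hp
  have h2 : (R / c : ℝ) ≤ N := Int.le_ceil _
  have hb : ∀ m : ℤ, |(m:ℝ)| ≤ ‖p‖ → -N ≤ m ∧ m ≤ N := by
    intro m hm
    have : |(m:ℝ)| < (N:ℝ) := lt_of_le_of_lt hm (lt_of_lt_of_le h1 h2)
    have : |m| ≤ N := by
      have := this.le
      rw [← Int.cast_abs] at this
      exact_mod_cast this
    constructor <;> [linarith [neg_abs_le m]; linarith [le_abs_self m]]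
  have hnp : ‖p‖ = max |(p.1 : ℝ)| |(p.2 : ℝ)| := by
    rw [Prod.norm_def]; simp [Int.norm_eq_abs]
  have hm1 := hb p.1 (hnp ▸ le_max_left _ _)
  have hm2 := hb p.2 (hnp ▸ le_max_right _ _)
  simp only [Set.mem_Icc, Prod.le_def]
  exact ⟨⟨hm1.1, hm2.1⟩, ⟨hm1.2, hm2.2⟩⟩

lemma summable_of_even_bound {f : ℤ × ℤ → ℂ} {C R : ℝ}
    (hb : ∀ p : ℤ × ℤ, R ≤ ‖L τ p‖ → ‖f p‖ ≤ C * ‖L τ p‖⁻¹ ^ 3) : Summable f := by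
  apply Summable.of_norm_bounded_eventually (g := fun p => C * ‖L τ p‖⁻¹ ^ 3)
    ((summable_norm_cube hτ).mul_left C)
  rw [Filter.eventually_cofinite]
  apply Set.Finite.subset (finite_small hτ R)
  intro p hp
  simp only [Set.mem_setOf_eq] at hp ⊢
  by_contra h
  push_neg at h
  exact hp (hb p h)

lemma ball_control {w : ℂ} (hw : w ∉ lat τ) :
    ∃ δ > 0, ∃ κ > 0, ∀ y ∈ Metric.ball w δ, ∀ p : ℤ × ℤ,
      κ ≤ ‖y - L τ p‖ ∧ κ * ‖L τ p‖ ≤ ‖y - L τ p‖ := by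
  have hne : (lat τ).Nonempty := ⟨0, zero_mem_lat⟩
  have hd : 0 < Metric.infDist w (lat τ) := by
    rw [← (lat_closed hτ).notMem_iff_infDist_pos hne]
    exact hw
  set d : ℝ := Metric.infDist w (lat τ) with hdd
  set R : ℝ := 2 * (‖w‖ + d) with hR
  have hR0 : 0 < R := by positivity
  refine ⟨d / 2, by positivity, min (min (d / 2) (1 / 2)) (d / (2 * R)), by positivity, ?_⟩
  intro y hy p
  have hyw : ‖y - w‖ < d / 2 := by
    rw [Metric.mem_ball, dist_eq_norm] at hy; exact hy
  have hylat : ∀ ω' ∈ lat τ, d ≤ ‖w - ω'‖ := by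
    intro ω' hω'
    have := Metric.infDist_le_dist_of_mem (x := w) hω'
    rw [dist_eq_norm] at this
    exact this
  have hmem : L τ p ∈ lat τ := ⟨p.1, p.2, rfl⟩
  set ω : ℂ := L τ p with hω
  have hbase : d / 2 ≤ ‖y - ω‖ := by
    have h1 : ‖w - ω‖ ≤ ‖w - y‖ + ‖y - ω‖ := by
      calc ‖w - ω‖ = ‖(w - y) + (y - ω)‖ := by ring_nf
      _ ≤ _ := norm_add_le _ _
    have h2 : ‖w - y‖ = ‖y - w‖ := norm_sub_rev _ _
    have := hylat ω hmem
    linarith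
  constructor
  · exact le_trans (le_trans (min_le_left _ _) (min_le_left _ _)) hbase
  · by_cases hcase : ‖ω‖ ≤ R
    · calc min (min (d / 2) (1 / 2)) (d / (2 * R)) * ‖ω‖ ≤ d / (2 * R) * ‖ω‖ :=
          mul_le_mul_of_nonneg_right (min_le_right _ _) (norm_nonneg _)
      _ ≤ d / (2 * R) * R := by
          apply mul_le_mul_of_nonneg_left hcase (by positivity)
      _ = d / 2 := by field_simp
      _ ≤ ‖y - ω‖ := hbase
    · push_neg at hcase
      have hy' : ‖y‖ ≤ ‖w‖ + d / 2 := by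
        calc ‖y‖ = ‖w + (y - w)‖ := by ring_nf
        _ ≤ ‖w‖ + ‖y - w‖ := norm_add_le _ _
        _ ≤ _ := by linarith
      have h3 : ‖ω‖ - ‖y‖ ≤ ‖y - ω‖ := by
        have := norm_sub_norm_le ω y
        rw [norm_sub_rev ω y] at this
        exact this
      have h4 : ‖w‖ + d ≤ ‖ω‖ / 2 := by
        rw [hR] at hcase; linarith
      calc min (min (d / 2) (1 / 2)) (d / (2 * R)) * ‖ω‖ ≤ 1 / 2 * ‖ω‖ :=
          mul_le_mul_of_nonneg_right (le_trans (min_le_left _ _) (min_le_right _ _))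
            (norm_nonneg _)
      _ ≤ ‖y - ω‖ := by linarith



omit hτ in
lemma hasDerivAt_zterm (p : ℤ × ℤ) (y : ℂ) (hyω : y - L τ p ≠ 0) :
    HasDerivAt (zterm τ p) (zterm' τ p y) y := by
  set ω := L τ p with hω
  have h1 : HasDerivAt (fun x : ℂ => x - ω) 1 y := (hasDerivAt_id y).sub_const _
  have h2 := h1.inv hyω
  have h3 : HasDerivAt (fun x : ℂ => x / ω ^ 2) (1 / ω ^ 2) y := (hasDerivAt_id y).div_const _
  have h4 := (h2.add_const (1 / ω)).add h3
  have hfun : zterm τ p = fun x => (x - ω)⁻¹ + 1 / ω + x / ω ^ 2 := by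
    funext x; simp [zterm, one_div, hω]
  rw [hfun]
  refine h4.congr_deriv ?_
  unfold zterm'
  rw [← hω]
  field_simp
  ring

omit hτ in
lemma hasDerivAt_zterm' (p : ℤ × ℤ) (y : ℂ) (hyω : y - L τ p ≠ 0) :
    HasDerivAt (zterm' τ p) (zterm'' τ p y) y := by
  set ω := L τ p
  have h1 : HasDerivAt (fun x : ℂ => (x - ω) ^ 2) ((2 : ℕ) * (y - ω) ^ 1 * 1) y :=
    ((hasDerivAt_id y).sub_const _).pow 2
  have h2 := (h1.inv (pow_ne_zero 2 hyω)).const_sub (1 / ω ^ 2)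
  have hfun : zterm' τ p = fun x => 1 / ω ^ 2 - ((x - ω) ^ 2)⁻¹ := by
    funext x; simp [zterm', one_div, ω]
  rw [hfun]
  refine h2.congr_deriv ?_
  show _ = 2 / (y - ω) ^ 3
  field_simp
  ring

-- norm bound for zterm, zterm', zterm''
omit hτ in
lemma zterm_bound {p : ℤ × ℤ} {y : ℂ} {κ c M : ℝ} (hκ : 0 < κ) (hc : 0 < c)
    (hcω : c ≤ ‖L τ p‖) (h2 : κ * ‖L τ p‖ ≤ ‖y - L τ p‖) (hM : ‖y‖ ≤ M) :
    ‖zterm τ p y‖ ≤ (M ^ 2 / κ) * ‖L τ p‖⁻¹ ^ 3 := by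
  set ω := L τ p with hωdef
  have hω0 : 0 < ‖ω‖ := lt_of_lt_of_le hc hcω
  have hωne : ω ≠ 0 := by rwa [← norm_pos_iff]
  have hyω0 : 0 < ‖y - ω‖ := lt_of_lt_of_le (by positivity) h2
  have hyωne : y - ω ≠ 0 := by rwa [← norm_pos_iff]
  have hM0 : 0 ≤ M := le_trans (norm_nonneg _) hM
  have hid : zterm τ p y * (ω ^ 2 * (y - ω)) = y ^ 2 := by
    unfold zterm; rw [← hωdef]; field_simp; ring
  have e1 : ‖zterm τ p y‖ * (‖ω‖ ^ 2 * ‖y - ω‖) = ‖y‖ ^ 2 := by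
    calc ‖zterm τ p y‖ * (‖ω‖ ^ 2 * ‖y - ω‖) = ‖zterm τ p y * (ω ^ 2 * (y - ω))‖ := by
          rw [norm_mul, norm_mul, norm_pow]
    _ = ‖y ^ 2‖ := by rw [hid]
    _ = ‖y‖ ^ 2 := norm_pow _ _
  have e3 : κ * ‖ω‖ ≤ ‖y - ω‖ := h2
  have e4 : ‖zterm τ p y‖ * (‖ω‖ ^ 2 * (κ * ‖ω‖)) ≤ M ^ 2 := by
    calc ‖zterm τ p y‖ * (‖ω‖ ^ 2 * (κ * ‖ω‖)) ≤ ‖zterm τ p y‖ * (‖ω‖ ^ 2 * ‖y - ω‖) := by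
          gcongr
    _ = ‖y‖ ^ 2 := e1
    _ ≤ M ^ 2 := by gcongr
  have hrw : (M ^ 2 / κ) * ‖ω‖⁻¹ ^ 3 = M ^ 2 / (κ * ‖ω‖ ^ 3) := by
    rw [inv_pow]; field_simp
  rw [hrw, le_div_iff₀ (by positivity)]
  calc ‖zterm τ p y‖ * (κ * ‖ω‖ ^ 3) = ‖zterm τ p y‖ * (‖ω‖ ^ 2 * (κ * ‖ω‖)) := by ring
  _ ≤ M ^ 2 := e4

omit hτ in
lemma zterm'_bound {p : ℤ × ℤ} {y : ℂ} {κ c M : ℝ} (hκ : 0 < κ) (hc : 0 < c)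
    (hcω : c ≤ ‖L τ p‖) (h2 : κ * ‖L τ p‖ ≤ ‖y - L τ p‖) (hM : ‖y‖ ≤ M) :
    ‖zterm' τ p y‖ ≤ (M * (M / c + 2) / κ ^ 2) * ‖L τ p‖⁻¹ ^ 3 := by
  set ω := L τ p with hωdef
  have hω0 : 0 < ‖ω‖ := lt_of_lt_of_le hc hcω
  have hωne : ω ≠ 0 := by rwa [← norm_pos_iff]
  have hyω0 : 0 < ‖y - ω‖ := lt_of_lt_of_le (by positivity) h2
  have hyωne : y - ω ≠ 0 := by rwa [← norm_pos_iff]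
  have hM0 : 0 ≤ M := le_trans (norm_nonneg _) hM
  have hid : zterm' τ p y * (ω ^ 2 * (y - ω) ^ 2) = y * (y - 2 * ω) := by
    unfold zterm'; rw [← hωdef]; field_simp; ring
  have e1 : ‖zterm' τ p y‖ * (‖ω‖ ^ 2 * ‖y - ω‖ ^ 2) = ‖y‖ * ‖y - 2 * ω‖ := by
    calc ‖zterm' τ p y‖ * (‖ω‖ ^ 2 * ‖y - ω‖ ^ 2)
        = ‖zterm' τ p y * (ω ^ 2 * (y - ω) ^ 2)‖ := by
          rw [norm_mul, norm_mul, norm_pow, norm_pow]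
    _ = ‖y * (y - 2 * ω)‖ := by rw [hid]
    _ = ‖y‖ * ‖y - 2 * ω‖ := norm_mul _ _
  have e2 : ‖y‖ * ‖y - 2 * ω‖ ≤ M * ((M / c + 2) * ‖ω‖) := by
    have hy2 : ‖y - 2 * ω‖ ≤ M + 2 * ‖ω‖ := by
      calc ‖y - 2 * ω‖ ≤ ‖y‖ + ‖2 * ω‖ := norm_sub_le _ _
      _ = ‖y‖ + 2 * ‖ω‖ := by norm_num [norm_mul]
      _ ≤ M + 2 * ‖ω‖ := by linarith
    have hy3 : M + 2 * ‖ω‖ ≤ (M / c + 2) * ‖ω‖ := by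
      have h5 : M ≤ (M / c) * ‖ω‖ := by
        rw [div_mul_eq_mul_div, le_div_iff₀ hc]
        exact mul_le_mul_of_nonneg_left hcω hM0
      nlinarith
    exact mul_le_mul hM (le_trans hy2 hy3) (norm_nonneg _) hM0
  have e3sq : (κ * ‖ω‖) ^ 2 ≤ ‖y - ω‖ ^ 2 := by gcongr
  have e4 : ‖zterm' τ p y‖ * (‖ω‖ ^ 2 * (κ ^ 2 * ‖ω‖ ^ 2)) ≤ M * ((M / c + 2) * ‖ω‖) := by
    calc ‖zterm' τ p y‖ * (‖ω‖ ^ 2 * (κ ^ 2 * ‖ω‖ ^ 2))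
        = ‖zterm' τ p y‖ * (‖ω‖ ^ 2 * (κ * ‖ω‖) ^ 2) := by ring
    _ ≤ ‖zterm' τ p y‖ * (‖ω‖ ^ 2 * ‖y - ω‖ ^ 2) := by gcongr
    _ = ‖y‖ * ‖y - 2 * ω‖ := e1
    _ ≤ _ := e2
  have hrw : (M * (M / c + 2) / κ ^ 2) * ‖ω‖⁻¹ ^ 3 = (M * ((M / c + 2) * ‖ω‖)) / (κ ^ 2 * ‖ω‖ ^ 4) := by
    rw [inv_pow, ← div_eq_mul_inv, div_div, div_eq_div_iff (by positivity) (by positivity)]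
    ring
  rw [hrw, le_div_iff₀ (by positivity)]
  calc ‖zterm' τ p y‖ * (κ ^ 2 * ‖ω‖ ^ 4) = ‖zterm' τ p y‖ * (‖ω‖ ^ 2 * (κ ^ 2 * ‖ω‖ ^ 2)) := by
        ring
  _ ≤ _ := e4

omit hτ in
lemma zterm''_bound {p : ℤ × ℤ} {y : ℂ} {κ c : ℝ} (hκ : 0 < κ) (hc : 0 < c)
    (hcω : c ≤ ‖L τ p‖) (h2 : κ * ‖L τ p‖ ≤ ‖y - L τ p‖) :
    ‖zterm'' τ p y‖ ≤ (2 / κ ^ 3) * ‖L τ p‖⁻¹ ^ 3 := by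
  set ω := L τ p with hωdef
  have hω0 : 0 < ‖ω‖ := lt_of_lt_of_le hc hcω
  have hyω0 : 0 < ‖y - ω‖ := lt_of_lt_of_le (by positivity) h2
  have e1 : ‖zterm'' τ p y‖ = 2 / ‖y - ω‖ ^ 3 := by
    unfold zterm''
    rw [← hωdef]
    rw [norm_div, norm_pow]
    norm_num
  rw [e1]
  have hrw : (2 / κ ^ 3) * ‖ω‖⁻¹ ^ 3 = 2 / (κ * ‖ω‖) ^ 3 := by
    rw [inv_pow]; field_simp
  rw [hrw]
  apply div_le_div_of_nonneg_left (by norm_num) (by positivity)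
  gcongr



include hτ

omit hτ in
lemma c_le_L {c : ℝ} (hc : 0 < c) (hcle : ∀ p : ℤ × ℤ, c * ‖p‖ ≤ ‖L τ p‖)
    {p : ℤ × ℤ} (hp : p ≠ 0) : c ≤ ‖L τ p‖ := by
  have h1 : c * 1 ≤ c * ‖p‖ := mul_le_mul_of_nonneg_left (norm_p_ge_one hp) hc.le
  have := hcle p
  linarith

lemma summable_zterm_full {w : ℂ} (hw : w ∉ lat τ) :
    Summable fun p : ℤ × ℤ => zterm τ p w := by
  obtain ⟨δ, hδ, κ, hκ, hctrl⟩ := ball_control hτ hw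
  obtain ⟨c, hc, hcle⟩ := exists_c hτ
  apply summable_of_even_bound hτ (C := ‖w‖ ^ 2 / κ) (R := c)
  intro p hp
  exact zterm_bound hκ hc hp ((hctrl w (Metric.mem_ball_self hδ) p).2) le_rfl

lemma summable_zterm'_full {w : ℂ} (hw : w ∉ lat τ) :
    Summable fun p : ℤ × ℤ => zterm' τ p w := by
  obtain ⟨δ, hδ, κ, hκ, hctrl⟩ := ball_control hτ hw
  obtain ⟨c, hc, hcle⟩ := exists_c hτ
  apply summable_of_even_bound hτ (C := ‖w‖ * (‖w‖ / c + 2) / κ ^ 2) (R := c)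
  intro p hp
  exact zterm'_bound hκ hc hp ((hctrl w (Metric.mem_ball_self hδ) p).2) le_rfl

lemma summable_zterm''_full {w : ℂ} (hw : w ∉ lat τ) :
    Summable fun p : ℤ × ℤ => zterm'' τ p w := by
  obtain ⟨δ, hδ, κ, hκ, hctrl⟩ := ball_control hτ hw
  obtain ⟨c, hc, hcle⟩ := exists_c hτ
  apply summable_of_even_bound hτ (C := 2 / κ ^ 3) (R := c)
  intro p hp
  exact zterm''_bound hκ hc hp ((hctrl w (Metric.mem_ball_self hδ) p).2)

lemma summable_zterm {w : ℂ} (hw : w ∉ lat τ) :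
    Summable fun p : S => zterm τ p.1 w :=
  (summable_zterm_full hτ hw).comp_injective Subtype.val_injective

lemma summable_zterm' {w : ℂ} (hw : w ∉ lat τ) :
    Summable fun p : S => zterm' τ p.1 w :=
  (summable_zterm'_full hτ hw).comp_injective Subtype.val_injective

lemma summable_zterm'' {w : ℂ} (hw : w ∉ lat τ) :
    Summable fun p : S => zterm'' τ p.1 w :=
  (summable_zterm''_full hτ hw).comp_injective Subtype.val_injective

lemma hasDerivAt_wzeta {w : ℂ} (hw : w ∉ lat τ) :
    HasDerivAt (wzeta (lat τ)) (Z1 τ w) w := by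
  obtain ⟨δ, hδ, κ, hκ, hctrl⟩ := ball_control hτ hw
  obtain ⟨c, hc, hcle⟩ := exists_c hτ
  set M : ℝ := ‖w‖ + δ with hM
  set C : ℝ := M * (M / c + 2) / κ ^ 2 with hC
  have hw0 : w ≠ 0 := fun h => hw (h ▸ zero_mem_lat)
  have h1 : HasDerivAt (fun z : ℂ => 1 / z) (-(1 / w ^ 2)) w := by
    simpa [one_div] using hasDerivAt_inv hw0
  have hMy : ∀ y ∈ Metric.ball w δ, ‖y‖ ≤ M := by
    intro y hy
    rw [Metric.mem_ball, dist_eq_norm] at hy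
    calc ‖y‖ = ‖w + (y - w)‖ := by ring_nf
    _ ≤ ‖w‖ + ‖y - w‖ := norm_add_le _ _
    _ ≤ M := by rw [hM]; linarith
  have htsum : HasDerivAt (fun z => ∑' p : S, zterm τ p.1 z)
      (∑' p : S, zterm' τ p.1 w) w := by
    apply hasDerivAt_tsum_of_isPreconnected
      (u := fun p : S => C * ‖L τ p.1‖⁻¹ ^ 3)
      (((summable_norm_cube hτ).mul_left C).comp_injective Subtype.val_injective)
      Metric.isOpen_ball (convex_ball w δ).isPreconnected
      (fun p y hy => hasDerivAt_zterm p.1 y (by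
        have := (hctrl y hy p.1).1
        intro h0; rw [h0, norm_zero] at this; linarith))
      (fun p y hy => zterm'_bound hκ hc (c_le_L hc hcle p.2)
        ((hctrl y hy p.1).2) (hMy y hy))
      (Metric.mem_ball_self hδ) (summable_zterm hτ hw) (Metric.mem_ball_self hδ)
  have hfun : wzeta (lat τ) = fun z => 1 / z + ∑' p : S, zterm τ p.1 z :=
    funext (zeta_eq hτ)
  rw [hfun]
  exact h1.add htsum

lemma hasDerivAt_Z1 {w : ℂ} (hw : w ∉ lat τ) :
    HasDerivAt (Z1 τ) (Z2 τ w) w := by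
  obtain ⟨δ, hδ, κ, hκ, hctrl⟩ := ball_control hτ hw
  obtain ⟨c, hc, hcle⟩ := exists_c hτ
  set C : ℝ := 2 / κ ^ 3 with hC
  have hw0 : w ≠ 0 := fun h => hw (h ▸ zero_mem_lat)
  have h1 : HasDerivAt (fun z : ℂ => -(1 / z ^ 2)) (2 / w ^ 3) w := by
    have ha : HasDerivAt (fun z : ℂ => z ^ 2) ((2 : ℕ) * w ^ 1 * 1) w :=
      (hasDerivAt_id w).pow 2
    have hb := (ha.inv (pow_ne_zero 2 hw0)).neg
    have : (fun z : ℂ => -(1 / z ^ 2)) = fun z : ℂ => -((z ^ 2)⁻¹) := by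
      funext z; rw [one_div]
    rw [this]
    refine hb.congr_deriv ?_
    field_simp
    ring
  have htsum : HasDerivAt (fun z => ∑' p : S, zterm' τ p.1 z)
      (∑' p : S, zterm'' τ p.1 w) w := by
    apply hasDerivAt_tsum_of_isPreconnected
      (u := fun p : S => C * ‖L τ p.1‖⁻¹ ^ 3)
      (((summable_norm_cube hτ).mul_left C).comp_injective Subtype.val_injective)
      Metric.isOpen_ball (convex_ball w δ).isPreconnected
      (fun p y hy => hasDerivAt_zterm' p.1 y (by
        have := (hctrl y hy p.1).1
        intro h0; rw [h0, norm_zero] at this; linarith))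
      (fun p y hy => zterm''_bound hκ hc (c_le_L hc hcle p.2)
        ((hctrl y hy p.1).2))
      (Metric.mem_ball_self hδ) (summable_zterm' hτ hw) (Metric.mem_ball_self hδ)
  have hfun : Z1 τ = fun z => -(1 / z ^ 2) + ∑' p : S, zterm' τ p.1 z := rfl
  rw [hfun]
  exact h1.add htsum




omit hτ in
lemma neg_mem_lat {y : ℂ} (h : y ∈ lat τ) : -y ∈ lat τ := by
  obtain ⟨m, n, rfl⟩ := h
  exact ⟨-m, -n, by push_cast; ring⟩


omit hτ in
lemma T_periodic (p₀ : ℤ × ℤ) (w : ℂ) : Tfun τ (w + L τ p₀) = Tfun τ w := by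
  unfold Tfun
  rw [← Equiv.tsum_eq (Equiv.addRight p₀)]
  apply tsum_congr
  intro q
  show zterm'' τ (q + p₀) (w + L τ p₀) = zterm'' τ q w
  unfold zterm''
  rw [L_add]
  congr 2
  ring

include hτ

lemma Z2_eq_T {w : ℂ} (hw : w ∉ lat τ) : Z2 τ w = Tfun τ w := by
  have hsplit := Summable.tsum_subtype_add_tsum_subtype_compl (summable_zterm''_full hτ hw)
    ({0} : Set (ℤ × ℤ))
  rw [show ∑' (x : ↑({0} : Set (ℤ × ℤ))), zterm'' τ (↑x) w = zterm'' τ 0 w from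
    tsum_singleton 0 (fun p => zterm'' τ p w)] at hsplit
  have he : ∑' x : ↑(({0} : Set (ℤ × ℤ))ᶜ), zterm'' τ x.1 w
      = ∑' p : S, zterm'' τ p.1 w := by
    exact Equiv.tsum_eq (Equiv.subtypeEquivRight (q := fun p : ℤ × ℤ => p ∈ ({0} : Set (ℤ × ℤ))ᶜ)
      (fun p => by simp)).symm (fun x : ↑(({0} : Set (ℤ × ℤ))ᶜ) => zterm'' τ x.1 w) |>.symm
  unfold Z2 Tfun
  rw [← hsplit, he]
  congr 1
  unfold zterm''
  rw [L_zero]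
  simp

lemma Z2_periodic (p₀ : ℤ × ℤ) {w : ℂ} (hw : w ∉ lat τ) (hw2 : w + L τ p₀ ∉ lat τ) :
    Z2 τ (w + L τ p₀) = Z2 τ w := by
  rw [Z2_eq_T hτ hw2, T_periodic, Z2_eq_T hτ hw]

omit hτ in
lemma const_of_deriv_zero {U : Set ℂ} (hU : IsOpen U) (hconn : IsPreconnected U)
    {f : ℂ → ℂ} (hf : ∀ x ∈ U, HasDerivAt f 0 x) {x y : ℂ} (hx : x ∈ U) (hy : y ∈ U) :
    f x = f y := by
  have hloc : ∀ z ∈ U, ∀ᶠ x' in nhds z, f x' = f z := by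
    intro z hz
    obtain ⟨r, hr, hball⟩ := Metric.isOpen_iff.mp hU z hz
    filter_upwards [Metric.ball_mem_nhds z hr] with x' hx'
    have hzero : ContinuousLinearMap.smulRight (1 : ℂ →L[ℂ] ℂ) (0 : ℂ) = 0 := by
      ext; simp
    apply Convex.is_const_of_fderivWithin_eq_zero (convex_ball z r)
      (fun a ha => ((hf a (hball ha)).differentiableAt).differentiableWithinAt)
      (fun a ha => ?_) hx' (Metric.mem_ball_self hr)
    rw [fderivWithin_of_isOpen Metric.isOpen_ball ha]
    have hFD : HasFDerivAt f (0 : ℂ →L[ℂ] ℂ) a := by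
      have := (hf a (hball ha)).hasFDerivAt
      rwa [ContinuousLinearMap.toSpanSingleton_zero] at this
    exact hFD.fderiv
  set V : Set ℂ := {z ∈ U | f z = f y} with hV
  set W : Set ℂ := {z ∈ U | f z ≠ f y} with hW
  have hVopen : IsOpen V := by
    rw [Metric.isOpen_iff]
    rintro z ⟨hzU, hzf⟩
    obtain ⟨r, hr, hball⟩ := Metric.isOpen_iff.mp hU z hzU
    obtain ⟨r2, hr2, hball2⟩ := Metric.nhds_basis_ball.eventually_iff.mp (hloc z hzU)
    refine ⟨min r r2, lt_min hr hr2, ?_⟩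
    intro x' hx'
    rw [Metric.mem_ball, lt_min_iff] at hx'
    exact ⟨hball hx'.1, by rw [hball2 hx'.2]; exact hzf⟩
  have hWopen : IsOpen W := by
    rw [Metric.isOpen_iff]
    rintro z ⟨hzU, hzf⟩
    obtain ⟨r, hr, hball⟩ := Metric.isOpen_iff.mp hU z hzU
    obtain ⟨r2, hr2, hball2⟩ := Metric.nhds_basis_ball.eventually_iff.mp (hloc z hzU)
    refine ⟨min r r2, lt_min hr hr2, ?_⟩
    intro x' hx'
    rw [Metric.mem_ball, lt_min_iff] at hx'
    exact ⟨hball hx'.1, by rw [hball2 hx'.2]; exact hzf⟩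
  by_contra hne
  have hcover : U ⊆ V ∪ W := by
    intro z hz
    by_cases h : f z = f y
    · exact Or.inl ⟨hz, h⟩
    · exact Or.inr ⟨hz, h⟩
  obtain ⟨q, hqU, hqV, hqW⟩ := hconn V W hVopen hWopen hcover ⟨y, hy, hy, rfl⟩ ⟨x, hx, hx, hne⟩
  exact hqW.2 hqV.2

lemma key (p₀ : ℤ × ℤ) {w z : ℂ} (hw : w ∉ lat τ) (hw2 : w + L τ p₀ ∉ lat τ)
    (hz : z ∉ lat τ) (hz2 : z + L τ p₀ ∉ lat τ) :
    wzeta (lat τ) (w + L τ p₀) - wzeta (lat τ) w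
      = wzeta (lat τ) (z + L τ p₀) - wzeta (lat τ) z := by
  rcases eq_or_ne w z with rfl | hne
  · rfl
  set ω₀ := L τ p₀ with hω₀
  set U : Set ℂ := {x | x ∉ lat τ ∧ x + ω₀ ∉ lat τ} with hU
  have hUopen : IsOpen U := by
    have : U = ((lat τ) ∪ ((fun x : ℂ => x + ω₀) ⁻¹' (lat τ)))ᶜ := by
      ext x
      simp only [hU, Set.mem_setOf_eq, Set.mem_compl_iff, Set.mem_union, Set.mem_preimage]
      tauto
    rw [this]
    exact (IsClosed.union (lat_closed hτ)
      ((lat_closed hτ).preimage (continuous_id.add continuous_const))).isOpen_compl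
  have hUconn : IsPreconnected U := by
    have h1 : ((fun x : ℂ => x + ω₀) ⁻¹' (lat τ)) = (fun y : ℂ => y - ω₀) '' (lat τ) := by
      ext x
      simp only [Set.mem_preimage, Set.mem_image]
      constructor
      · intro h; exact ⟨x + ω₀, h, by ring⟩
      · rintro ⟨a, ha, rfl⟩; simpa using ha
    have hcnt : ((lat τ) ∪ ((fun x : ℂ => x + ω₀) ⁻¹' (lat τ))).Countable := by
      rw [h1]
      exact (lat_countable hτ).union ((lat_countable hτ).image _)
    have hrank : 1 < Module.rank ℝ ℂ := by
      rw [Complex.rank_real_complex]; norm_num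
    have hpc := hcnt.isPathConnected_compl_of_one_lt_rank hrank
    have : U = ((lat τ) ∪ ((fun x : ℂ => x + ω₀) ⁻¹' (lat τ)))ᶜ := by
      ext x
      simp only [hU, Set.mem_setOf_eq, Set.mem_compl_iff, Set.mem_union, Set.mem_preimage]
      tauto
    rw [this]
    exact hpc.isConnected.isPreconnected
  have hwU : w ∈ U := ⟨hw, hw2⟩
  have hzU : z ∈ U := ⟨hz, hz2⟩
  set F : ℂ → ℂ := fun x => wzeta (lat τ) (x + ω₀) - wzeta (lat τ) x with hF
  set H : ℂ → ℂ := fun x => Z1 τ (x + ω₀) - Z1 τ x with hH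
  have hshift : ∀ (G : ℂ → ℂ) (G' : ℂ) (x : ℂ), HasDerivAt G G' (x + ω₀) →
      HasDerivAt (fun x => G (x + ω₀)) G' x := by
    intro G G' x hG
    have := hG.comp x ((hasDerivAt_id x).add_const ω₀)
    rw [mul_one] at this; exact this
  have hF' : ∀ x ∈ U, HasDerivAt F (H x) x := by
    intro x hx
    exact (hshift _ _ x (hasDerivAt_wzeta hτ hx.2)).sub (hasDerivAt_wzeta hτ hx.1)
  have hH' : ∀ x ∈ U, HasDerivAt H 0 x := by
    intro x hx
    have h2 := (hshift _ _ x (hasDerivAt_Z1 hτ hx.2)).sub (hasDerivAt_Z1 hτ hx.1)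
    rw [show Z2 τ (x + ω₀) - Z2 τ x = 0 by
      rw [Z2_periodic hτ p₀ hx.1 hx.2]; ring] at h2
    exact h2
  set α := H w with hα
  have hHconst : ∀ x ∈ U, H x = α := fun x hx =>
    const_of_deriv_zero hUopen hUconn hH' hx hwU
  have hG' : ∀ x ∈ U, HasDerivAt (fun x => F x - α * x) 0 x := by
    intro x hx
    have h1 := (hF' x hx).sub ((hasDerivAt_id x).const_mul α)
    rw [show H x - α * 1 = 0 by rw [hHconst x hx]; ring] at h1
    exact h1
  have hGconst : ∀ x ∈ U, ∀ y ∈ U, F x - α * x = F y - α * y := fun x hx y hy =>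
    const_of_deriv_zero hUopen hUconn hG' hx hy
  have hodd : ∀ x : ℂ, F (-x - ω₀) = F x := by
    intro x
    show wzeta (lat τ) ((-x - ω₀) + ω₀) - wzeta (lat τ) (-x - ω₀) = _
    rw [show (-x - ω₀) + ω₀ = -x by ring, show (-x - ω₀) = -(x + ω₀) by ring,
      zeta_odd hτ, zeta_odd hτ]
    show -wzeta (lat τ) x - -wzeta (lat τ) (x + ω₀)
        = wzeta (lat τ) (x + ω₀) - wzeta (lat τ) x
    ring
  have hmemneg : ∀ x ∈ U, -x - ω₀ ∈ U := by
    rintro x ⟨hx1, hx2⟩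
    constructor
    · rw [show -x - ω₀ = -(x + ω₀) by ring]
      intro h
      exact hx2 (by simpa using neg_mem_lat h)
    · rw [show -x - ω₀ + ω₀ = -x by ring]
      intro h
      exact hx1 (by simpa using neg_mem_lat h)
  have hα0 : α = 0 := by
    have h2 := hGconst w hwU _ (hmemneg w hwU)
    rw [hodd w] at h2
    have h3 := hGconst z hzU _ (hmemneg z hzU)
    rw [hodd z] at h3
    have h4 : α * (2 * w + ω₀) = 0 := by linear_combination -h2
    have h5 : α * (2 * z + ω₀) = 0 := by linear_combination -h3
    have h6 : α * (2 * (w - z)) = 0 := by linear_combination h4 - h5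
    rcases mul_eq_zero.mp h6 with h | h
    · exact h
    · exfalso
      apply hne
      rcases mul_eq_zero.mp h with h' | h'
      · norm_num at h'
      · exact sub_eq_zero.mp h'
  have := hGconst w hwU z hzU
  rw [hα0] at this
  simpa using this



lemma W_not_lat {W : ℂ} (hW : ∀ p : ℤ × ℤ, W + L τ p ∉ lat τ) : W ∉ lat τ := by
  have := hW 0
  rwa [L_zero, add_zero] at this

lemma key' (p₀ : ℤ × ℤ) {W z : ℂ} (hW : ∀ p : ℤ × ℤ, W + L τ p ∉ lat τ)
    (hz : z ∉ lat τ) (hz2 : z + L τ p₀ ∉ lat τ) :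
    wzeta (lat τ) (W + L τ p₀) - wzeta (lat τ) W
      = wzeta (lat τ) (z + L τ p₀) - wzeta (lat τ) z :=
  key hτ p₀ (W_not_lat hτ hW) (hW p₀) hz hz2

lemma q_add {W : ℂ} (hW : ∀ p : ℤ × ℤ, W + L τ p ∉ lat τ) (p₁ p₂ : ℤ × ℤ) :
    wzeta (lat τ) (W + L τ (p₁ + p₂)) - wzeta (lat τ) W
      = (wzeta (lat τ) (W + L τ p₁) - wzeta (lat τ) W)
        + (wzeta (lat τ) (W + L τ p₂) - wzeta (lat τ) W) := by
  have hW1 : ∀ p : ℤ × ℤ, (W + L τ p₁) + L τ p ∉ lat τ := by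
    intro p
    rw [add_assoc, ← L_add]
    exact hW (p₁ + p)
  have h1 : wzeta (lat τ) ((W + L τ p₁) + L τ p₂) - wzeta (lat τ) (W + L τ p₁)
      = wzeta (lat τ) (W + L τ p₂) - wzeta (lat τ) W :=
    key' hτ p₂ hW1 (W_not_lat hτ hW) (hW p₂)
  have h2 : W + L τ (p₁ + p₂) = (W + L τ p₁) + L τ p₂ := by rw [L_add]; ring
  rw [h2]
  linear_combination h1

lemma q_lin {W : ℂ} (hW : ∀ p : ℤ × ℤ, W + L τ p ∉ lat τ) (m n : ℤ) :
    wzeta (lat τ) (W + L τ (m, n)) - wzeta (lat τ) W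
      = (m : ℂ) * (wzeta (lat τ) (W + L τ (1, 0)) - wzeta (lat τ) W)
        + (n : ℂ) * (wzeta (lat τ) (W + L τ (0, 1)) - wzeta (lat τ) W) := by
  set φ : (ℤ × ℤ) →+ ℂ :=
    AddMonoidHom.mk' (fun p => wzeta (lat τ) (W + L τ p) - wzeta (lat τ) W)
      (q_add hτ hW) with hφ
  have h : ((m, n) : ℤ × ℤ) = m • ((1, 0) : ℤ × ℤ) + n • ((0, 1) : ℤ × ℤ) := by
    simp [Prod.ext_iff]
  have h2 : φ (m, n) = (m : ℂ) * φ (1, 0) + (n : ℂ) * φ (0, 1) := by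
    rw [h, map_add, map_zsmul, map_zsmul, zsmul_eq_mul, zsmul_eq_mul]
  exact h2

end WZ

open WZ in
theorem g_slash_sub_g (s t : ℚ) (hst : ¬ ∃ m n : ℤ, s = (m : ℚ) ∧ t = (n : ℚ))
    (a b c d : ℤ) (hA : a * d - b * c = 1)
    (hΓ : ∃ m n : ℤ, s * a + t * c - s = (m : ℚ) ∧ s * b + t * d - t = (n : ℚ)) :
    (∃ u : ℤ, s * (a - 1) + t * c = (u : ℚ)) ∧
    (∃ v : ℤ, s * b + t * (d - 1) = (v : ℚ)) ∧
    (∀ τ : ℂ, 0 < τ.im → ∀ z : ℂ,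
      z ∉ lat τ → z + τ ∉ lat τ → z + 1 ∉ lat τ →
      ((c : ℂ) * τ + (d : ℂ))⁻¹ *
          g s t (((a : ℂ) * τ + (b : ℂ)) / ((c : ℂ) * τ + (d : ℂ))) - g s t τ =
        ((s * (a - 1) + t * c : ℚ) : ℂ) * (wzeta (lat τ) (z + τ) - wzeta (lat τ) z) +
          ((s * b + t * (d - 1) : ℚ) : ℂ) * (wzeta (lat τ) (z + 1) - wzeta (lat τ) z)) := by
  obtain ⟨m, n, hm, hn⟩ := hΓ
  have hu : s * (a - 1) + t * c = (m : ℚ) := by linear_combination hm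
  have hv : s * b + t * (d - 1) = (n : ℚ) := by linear_combination hn
  refine ⟨⟨m, hu⟩, ⟨n, hv⟩, ?_⟩
  intro τ hτ z hz hz1 hz2
  set W : ℂ := (s : ℂ) * τ + (t : ℂ) with hWdef
  have hWfam : ∀ p : ℤ × ℤ, W + L τ p ∉ lat τ := by
    intro p hmem
    have hcast : W + L τ p = (((s : ℝ) + (p.1 : ℝ) : ℝ) : ℂ) * τ
        + (((t : ℝ) + (p.2 : ℝ) : ℝ) : ℂ) := by
      rw [hWdef]; unfold L; push_cast; ring
    rw [hcast] at hmem
    obtain ⟨m', n', hm', hn'⟩ := (real_comb_mem hτ).mp hmem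
    apply hst
    refine ⟨m' - p.1, n' - p.2, ?_, ?_⟩
    · have : (s : ℝ) = ((m' - p.1 : ℤ) : ℝ) := by push_cast; linarith
      exact_mod_cast this
    · have : (t : ℝ) = ((n' - p.2 : ℤ) : ℝ) := by push_cast; linarith
      exact_mod_cast this
  set D : ℂ := (c : ℂ) * τ + (d : ℂ) with hDdef
  have hD : D ≠ 0 := cd_ne_zero hτ hA
  set W' : ℂ := ((s : ℂ) * a + (t : ℂ) * c) * τ + ((s : ℂ) * b + (t : ℂ) * d) with hW'def
  have hslash : D⁻¹ * g s t (((a : ℂ) * τ + (b : ℂ)) / D) = wzeta (lat τ) W' := by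
    unfold g
    have h1 : (s : ℂ) * (((a : ℂ) * τ + (b : ℂ)) / D) + (t : ℂ) = D⁻¹ * W' := by
      rw [hW'def]
      field_simp
      ring
    rw [h1, lat_image hτ hA, hom D⁻¹ (inv_ne_zero hD) (lat τ) W', inv_inv,
      ← mul_assoc, inv_mul_cancel₀ hD, one_mul]
  have hmC : (s : ℂ) * (a : ℂ) + (t : ℂ) * (c : ℂ) - (s : ℂ) = (m : ℂ) := by
    exact_mod_cast hm
  have hnC : (s : ℂ) * (b : ℂ) + (t : ℂ) * (d : ℂ) - (t : ℂ) = (n : ℂ) := by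
    exact_mod_cast hn
  have hW'W : W' = W + L τ (m, n) := by
    show W' = W + ((m : ℂ) * τ + (n : ℂ))
    rw [hW'def, hWdef]
    linear_combination τ * hmC + hnC
  have hL10 : L τ (1, 0) = τ := by unfold L; simp
  have hL01 : L τ (0, 1) = 1 := by unfold L; simp
  have e1 : wzeta (lat τ) (W + L τ (1, 0)) - wzeta (lat τ) W
      = wzeta (lat τ) (z + τ) - wzeta (lat τ) z := by
    rw [key' hτ (1, 0) hWfam hz (by rwa [hL10]), hL10]
  have e2 : wzeta (lat τ) (W + L τ (0, 1)) - wzeta (lat τ) W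
      = wzeta (lat τ) (z + 1) - wzeta (lat τ) z := by
    rw [key' hτ (0, 1) hWfam hz (by rwa [hL01]), hL01]
  have hcoef1 : ((s * (a - 1) + t * c : ℚ) : ℂ) = (m : ℂ) := by
    rw [hu]; push_cast; ring
  have hcoef2 : ((s * b + t * (d - 1) : ℚ) : ℂ) = (n : ℂ) := by
    rw [hv]; push_cast; ring
  calc D⁻¹ * g s t (((a : ℂ) * τ + (b : ℂ)) / D) - g s t τ
      = wzeta (lat τ) (W + L τ (m, n)) - wzeta (lat τ) W := by
        rw [hslash, hW'W]; rfl
  _ = (m : ℂ) * (wzeta (lat τ) (W + L τ (1, 0)) - wzeta (lat τ) W)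
        + (n : ℂ) * (wzeta (lat τ) (W + L τ (0, 1)) - wzeta (lat τ) W) :=
      q_lin hτ hWfam m n
  _ = ((s * (a - 1) + t * c : ℚ) : ℂ) * (wzeta (lat τ) (z + τ) - wzeta (lat τ) z) +
          ((s * b + t * (d - 1) : ℚ) : ℂ) * (wzeta (lat τ) (z + 1) - wzeta (lat τ) z) := by
    rw [e1, e2, hcoef1, hcoef2]
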